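/- Let y ∈ ℝ^N with sin(y_j) ≠ 0 for all j and ∑_j cot(y_j) = 0. Suppose the gradient vectors ∇Φ̃(y) = Φ(y)²·(ℓ_1 cos(y_1)/sin³(y_1), ..., ℓ_N cos(y_N)/sin³(y_N)) and ∇Ψ(y) = (1/sin²(y_1), ..., 1/sin²(y_N)) are ℝ-linearly dependent. Then y_j ≡ π/2 mod π for every j ∈ {1,...,N}. -/

import Mathlib

open Real Finset

/-- If on `Z_∅` the gradients of `Φ̃` and `Ψ` are linearly dependent, then
`y_j ≡ π/2 mod π` for every `j`. -/
theorem gradients_dependent (N : ℕ) (hN : 2 ≤ N) (ℓ : Fin N → ℝ) (hℓ : ∀ j, 0 < ℓ j)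
    (y : Fin N → ℝ) (hsin : ∀ j, Real.sin (y j) ≠ 0)
    (hΨ : ∑ j : Fin N, Real.cot (y j) = 0)
    (a b : ℝ) (hab : ¬(a = 0 ∧ b = 0))
    (hdep : ∀ j : Fin N,
      a * ((2 / ∑ k : Fin N, ℓ k / Real.sin (y k) ^ 2) ^ 2
            * (ℓ j * Real.cos (y j) / Real.sin (y j) ^ 3))
        + b * (1 / Real.sin (y j) ^ 2) = 0) :
    ∀ j : Fin N, ∃ m : ℤ, y j = Real.pi / 2 + m * Real.pi := by
  have hNpos : 0 < N := by omega
  have j0 : Fin N := ⟨0, hNpos⟩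
  set S : ℝ := ∑ k : Fin N, ℓ k / Real.sin (y k) ^ 2 with hS
  have hSpos : 0 < S := by
    apply Finset.sum_pos
    · intro k _
      have hs := hsin k
      exact div_pos (hℓ k) (pow_two_pos_of_ne_zero hs)
    · exact ⟨j0, Finset.mem_univ j0⟩
  set c : ℝ := (2 / S) ^ 2 with hc
  have hcpos : 0 < c := by positivity
  have ha : a ≠ 0 := by
    intro ha0
    have h := hdep j0
    rw [ha0, zero_mul, zero_add] at h
    have hb : b = 0 := by
      have h2 : Real.sin (y j0) ^ 2 ≠ 0 := pow_ne_zero 2 (hsin j0)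
      field_simp at h
      exact (div_eq_zero_iff.mp h).resolve_right h2
    exact hab ⟨ha0, hb⟩
  -- key: for each j, a * c * ℓ j * cot (y j) + b = 0
  have key : ∀ j, Real.cot (y j) = -b / (a * c * ℓ j) := by
    intro j
    have h := hdep j
    have hs := hsin j
    have hlj := (hℓ j).ne'
    rw [Real.cot_eq_cos_div_sin]
    have hcne : c ≠ 0 := hcpos.ne'
    field_simp at h ⊢
    have h3 : Real.sin (y j) ^ 2 * (Real.cos (y j) * (a * c * ℓ j) + b * Real.sin (y j)) = 0 := by
      linear_combination (Real.sin (y j)) ^ 2 * h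
    rcases mul_eq_zero.mp h3 with h4 | h4
    · exact absurd h4 (pow_ne_zero 2 hs)
    · linarith
  have hsum : (-b / (a * c)) * ∑ j : Fin N, (ℓ j)⁻¹ = 0 := by
    rw [Finset.mul_sum, ← hΨ]
    apply Finset.sum_congr rfl
    intro j _
    rw [key j]
    field_simp
  have hsumpos : 0 < ∑ j : Fin N, (ℓ j)⁻¹ := by
    apply Finset.sum_pos (fun k _ => inv_pos.mpr (hℓ k)) ⟨j0, Finset.mem_univ j0⟩
  have hK : -b / (a * c) = 0 := by
    rcases mul_eq_zero.mp hsum with h | h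
    · exact h
    · exact absurd h hsumpos.ne'
  have hb0 : b = 0 := by
    have hac : a * c ≠ 0 := mul_ne_zero ha hcpos.ne'
    field_simp at hK
    linarith
  intro j
  have hcot : Real.cot (y j) = 0 := by rw [key j, hb0]; simp
  have hcos : Real.cos (y j) = 0 := by
    rw [Real.cot_eq_cos_div_sin] at hcot
    exact (div_eq_zero_iff.mp hcot).resolve_right (hsin j)
  rw [Real.cos_eq_zero_iff] at hcos
  obtain ⟨n, hn⟩ := hcos
  exact ⟨n, by rw [hn]; ring⟩
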